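/- Suppose there is a family {C_ξ : ξ < ω₂} of clubs of ω₁ such that every club of ω₁ contains some C_ξ (i.e., the club filter on ω₁ has density ℵ₂). Then CG(S²₁)⁻ holds: there is a sequence ⟨𝒞_α : α ∈ S²₁⟩ where each 𝒞_α is a family of at most ℵ₂ clubs of α, such that for every club C ⊆ ω₂ there exist α ∈ S²₁ and D ∈ 𝒞_α with D ⊆ C. -/

import Mathlib

open Cardinal Set

def IsClubSet (C : Set Ordinal) (δ : Ordinal) : Prop :=
  (∀ x ∈ C, x < δ) ∧ (∀ x < δ, ∃ y ∈ C, x ≤ y) ∧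
  (∀ x, x < δ → x ≠ 0 → (∀ y < x, ∃ z ∈ C, y < z ∧ z < x) → x ∈ C)

def S21 (δ : Ordinal) : Prop := δ < (aleph 2).ord ∧ Ordinal.cof δ = aleph 1

/-- The closure of `D` below `α` : `D` together with all its limit points below `α`. -/
def clo (α : Ordinal) (D : Set Ordinal) : Set Ordinal :=
  D ∪ {x | x < α ∧ x ≠ 0 ∧ ∀ y < x, ∃ z ∈ D, y < z ∧ z < x}

lemma clo_isClub {α : Ordinal} {D : Set Ordinal} (h1 : ∀ x ∈ D, x < α)
    (h2 : ∀ x < α, ∃ y ∈ D, x ≤ y) : IsClubSet (clo α D) α := by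
  refine ⟨?_, ?_, ?_⟩
  · rintro x (hx | ⟨hx, -⟩)
    · exact h1 x hx
    · exact hx
  · intro x hx
    obtain ⟨y, hy, hxy⟩ := h2 x hx
    exact ⟨y, Or.inl hy, hxy⟩
  · intro x hx hx0 hlim
    refine Or.inr ⟨hx, hx0, fun y hy => ?_⟩
    obtain ⟨z, hz, hyz, hzx⟩ := hlim y hy
    rcases hz with hz | ⟨-, -, hz⟩
    · exact ⟨z, hz, hyz, hzx⟩
    · obtain ⟨v, hv, hyv, hvz⟩ := hz y hyz
      exact ⟨v, hv, hyv, hvz.trans hzx⟩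

universe u v

/-- Transfer a set of ordinals from universe `u` to universe `v`. -/
def trSet (D : Set Ordinal.{u}) : Set Ordinal.{v} :=
  {β | ∃ x ∈ D, Ordinal.lift.{v} x = Ordinal.lift.{u} β}

lemma lift_omega1 : Ordinal.lift.{v, u} ((aleph 1).ord) = (aleph 1).ord := by
  rw [Cardinal.lift_ord, Cardinal.lift_aleph, Ordinal.lift_one]

lemma trSet_trSet {B : Set Ordinal.{v}} : trSet.{u, v} (trSet.{v, u} B) ⊆ B := by
  rintro β ⟨x, ⟨β', hβ', hβ'x⟩, hxβ⟩
  have h := hβ'x.trans hxβ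
  rw [Ordinal.lift_inj] at h
  exact h ▸ hβ'

lemma trSet_mono {D D' : Set Ordinal.{u}} (h : D ⊆ D') : trSet.{u, v} D ⊆ trSet.{u, v} D' :=
  fun _ ⟨x, hx, he⟩ => ⟨x, h hx, he⟩

lemma trSet_isClub {D : Set Ordinal.{u}} (h : IsClubSet D ((aleph 1).ord : Ordinal.{u})) :
    IsClubSet (trSet.{u, v} D) ((aleph 1).ord : Ordinal.{v}) := by
  have hO : Ordinal.lift.{v} ((aleph 1).ord : Ordinal.{u}) =
      Ordinal.lift.{u} ((aleph 1).ord : Ordinal.{v}) := by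
    rw [lift_omega1, lift_omega1]
  refine ⟨?_, ?_, ?_⟩
  · rintro β ⟨x, hxD, hx⟩
    have : Ordinal.lift.{v} x < Ordinal.lift.{v} ((aleph 1).ord : Ordinal.{u}) :=
      Ordinal.lift_lt.2 (h.1 x hxD)
    rw [hx, hO] at this
    exact Ordinal.lift_lt.1 this
  · intro β hβ
    have h1 : Ordinal.lift.{u} β ≤ Ordinal.lift.{v} ((aleph 1).ord : Ordinal.{u}) := by
      rw [hO]; exact (Ordinal.lift_lt.2 hβ).le
    obtain ⟨x₀, hx₀⟩ := Ordinal.mem_range_lift_of_le h1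
    have hx₀lt : x₀ < (aleph 1).ord := by
      rw [← Ordinal.lift_lt.{v}, hx₀, hO]; exact Ordinal.lift_lt.2 hβ
    obtain ⟨y, hyD, hx₀y⟩ := h.2.1 x₀ hx₀lt
    have h2 : Ordinal.lift.{v} y ≤ Ordinal.lift.{u} ((aleph 1).ord : Ordinal.{v}) := by
      rw [← hO]; exact (Ordinal.lift_lt.2 (h.1 y hyD)).le
    obtain ⟨β', hβ'⟩ := Ordinal.mem_range_lift_of_le h2
    refine ⟨β', ⟨y, hyD, hβ'.symm⟩, ?_⟩
    rw [← Ordinal.lift_le.{u}, ← hx₀, hβ']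
    exact Ordinal.lift_le.2 hx₀y
  · intro β hβ hβ0 hlim
    have h1 : Ordinal.lift.{u} β ≤ Ordinal.lift.{v} ((aleph 1).ord : Ordinal.{u}) := by
      rw [hO]; exact (Ordinal.lift_lt.2 hβ).le
    obtain ⟨x, hx⟩ := Ordinal.mem_range_lift_of_le h1
    have hxβ : ∀ {w : Ordinal.{u}}, w < x ↔ Ordinal.lift.{v} w < Ordinal.lift.{u} β := by
      intro w
      rw [← hx, Ordinal.lift_lt]
    have hxD : x ∈ D := by
      refine h.2.2 x ?_ ?_ ?_
      · rw [← Ordinal.lift_lt.{v}, hx, hO]; exact Ordinal.lift_lt.2 hβ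
      · intro h0
        apply hβ0
        rw [h0, Ordinal.lift_zero] at hx
        rw [← Ordinal.lift_inj.{u}, Ordinal.lift_zero]
        exact hx.symm
      · intro y hy
        have h2 : Ordinal.lift.{v} y ≤ Ordinal.lift.{u} β := (hxβ.1 hy).le
        obtain ⟨βy, hβy⟩ := Ordinal.mem_range_lift_of_le h2
        have hβyβ : βy < β := by
          rw [← Ordinal.lift_lt.{u}, hβy]; exact hxβ.1 hy
        obtain ⟨γ, ⟨z, hzD, hz⟩, hyγ, hγβ⟩ := hlim βy hβyβ
        refine ⟨z, hzD, ?_, ?_⟩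
        · rw [← Ordinal.lift_lt.{v}, ← hβy, hz]
          exact Ordinal.lift_lt.2 hyγ
        · rw [hxβ, hz]
          exact Ordinal.lift_lt.2 hγβ
    exact ⟨x, hxD, hx⟩

/-- From a fundamental sequence we can build a "normal-enough" cofinal map. -/
lemma exists_e_aux {α o : Ordinal.{u}} (f : ∀ b < o, Ordinal.{u})
    (hsm : ∀ {i j : Ordinal} (hi : i < o) (hj : j < o), i < j → f i hi < f j hj)
    (hbl : Ordinal.blsub o f = α) (ho : o = (aleph 1).ord) :
    ∃ e : Ordinal.{u} → Ordinal.{u},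
      (∀ {β γ : Ordinal.{u}}, β ≤ γ → e β ≤ e γ) ∧
      (∀ {β γ : Ordinal.{u}}, β < γ → γ < (aleph 1).ord → e β < e γ) ∧
      (∀ β < (aleph 1).ord, e β < α) ∧
      (∀ x < α, ∃ β < (aleph 1).ord, x < e β) ∧
      (∀ β y, y < e β → ∃ γ < β, y < e (Order.succ γ)) := by
  subst ho
  set g : Ordinal → Ordinal := fun γ =>
    if h : γ < (aleph 1).ord then f γ h else 0 with hg
  have hgf : ∀ γ (h : γ < (aleph 1).ord), g γ = f γ h := fun γ h => dif_pos h
  have hgmono : ∀ {γ γ' : Ordinal}, γ < γ' → γ' < (aleph 1).ord → g γ < g γ' := by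
    intro γ γ' h h'
    rw [hgf γ (h.trans h'), hgf γ' h']
    exact hsm _ _ h
  set e : Ordinal → Ordinal := fun β => Ordinal.blsub β (fun γ _ => g γ) with he
  have hmono : ∀ {β γ : Ordinal}, β ≤ γ → e β ≤ e γ := by
    intro β γ h
    exact Ordinal.blsub_le fun i hi => Ordinal.lt_blsub _ i (hi.trans_le h)
  have hle : ∀ {β : Ordinal}, β < (aleph 1).ord → e β ≤ g β := by
    intro β hβ
    exact Ordinal.blsub_le fun i hi => hgmono hi hβ
  have hsmono : ∀ {β γ : Ordinal}, β < γ → γ < (aleph 1).ord → e β < e γ := by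
    intro β γ h h'
    exact lt_of_le_of_lt (hle (h.trans h')) (Ordinal.lt_blsub _ β h)
  have hlim : Order.IsSuccLimit ((aleph 1).ord) := Cardinal.isSuccLimit_ord (aleph0_le_aleph 1)
  refine ⟨e, hmono, hsmono, ?_, ?_, ?_⟩
  · intro β hβ
    have : g β < α := by
      rw [hgf β hβ, ← hbl]; exact Ordinal.lt_blsub _ β hβ
    exact lt_of_le_of_lt (hle hβ) this
  · intro x hx
    rw [← hbl] at hx
    obtain ⟨i, hi, hxi⟩ := Ordinal.lt_blsub_iff.1 hx
    refine ⟨Order.succ i, hlim.succ_lt hi, ?_⟩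
    have : g i < e (Order.succ i) := Ordinal.lt_blsub _ i (Order.lt_succ i)
    rw [← hgf i hi] at hxi
    exact hxi.trans_lt this
  · intro β y hy
    obtain ⟨γ, hγ, hyγ⟩ := Ordinal.lt_blsub_iff.1 hy
    exact ⟨γ, hγ, hyγ.trans_lt (Ordinal.lt_blsub _ γ (Order.lt_succ γ))⟩

lemma exists_e {α : Ordinal.{u}} (hcof : α.cof = aleph 1) :
    ∃ e : Ordinal.{u} → Ordinal.{u},
      (∀ {β γ : Ordinal.{u}}, β ≤ γ → e β ≤ e γ) ∧
      (∀ {β γ : Ordinal.{u}}, β < γ → γ < (aleph 1).ord → e β < e γ) ∧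
      (∀ β < (aleph 1).ord, e β < α) ∧
      (∀ x < α, ∃ β < (aleph 1).ord, x < e β) ∧
      (∀ β y, y < e β → ∃ γ < β, y < e (Order.succ γ)) := by
  obtain ⟨f, hf⟩ := Ordinal.exists_fundamental_sequence α
  exact exists_e_aux f (fun hi hj h => hf.2.1 hi hj h) hf.2.2 (by rw [hcof])

/-- If the club filter on ω₁ has density ℵ₂, then CG(S²₁)⁻ holds. -/
theorem stmt8 (C : Ordinal → Set Ordinal)
    (hC : ∀ ξ, ξ < (aleph 2).ord → IsClubSet (C ξ) (aleph 1).ord)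
    (hdense : ∀ D, IsClubSet D (aleph 1).ord → ∃ ξ < (aleph 2).ord, C ξ ⊆ D) :
    ∃ 𝒞 : Ordinal → Set (Set Ordinal),
      (∀ α, S21 α → #(↥(𝒞 α)) ≤ aleph 2 ∧ ∀ D ∈ 𝒞 α, IsClubSet D α) ∧
      (∀ E, IsClubSet E (aleph 2).ord → ∃ α, S21 α ∧ ∃ D ∈ 𝒞 α, D ⊆ E) := by
  classical
  -- basic facts
  have hw1lim : Order.IsSuccLimit ((aleph 1).ord) := Cardinal.isSuccLimit_ord (aleph0_le_aleph 1)
  have hw1cof : ((aleph 1).ord).cof = aleph 1 := Cardinal.isRegular_aleph_one.cof_eq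
  have h2succ : (2 : Ordinal) = Order.succ 1 := by
    rw [← Ordinal.add_one_eq_succ]; norm_num
  have hw2reg : Cardinal.IsRegular (aleph 2) := by
    rw [h2succ]; exact Cardinal.isRegular_aleph_succ 1
  have hw2cof : ((aleph 2).ord).cof = aleph 2 := hw2reg.cof_eq
  have hw12 : (aleph 1).ord < (aleph 2).ord :=
    Cardinal.ord_lt_ord.2 (Cardinal.aleph_lt_aleph.2 one_lt_two)
  -- choose the cofinal maps
  have hex : ∀ α : Ordinal, ∃ e : Ordinal → Ordinal, α.cof = aleph 1 →
      ((∀ {β γ : Ordinal}, β ≤ γ → e β ≤ e γ) ∧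
      (∀ {β γ : Ordinal}, β < γ → γ < (aleph 1).ord → e β < e γ) ∧
      (∀ β < (aleph 1).ord, e β < α) ∧
      (∀ x < α, ∃ β < (aleph 1).ord, x < e β) ∧
      (∀ β y, y < e β → ∃ γ < β, y < e (Order.succ γ))) := by
    intro α
    by_cases h : α.cof = aleph 1
    · obtain ⟨e, he⟩ := exists_e h
      exact ⟨e, fun _ => he⟩
    · exact ⟨id, fun h' => absurd h' h⟩
  choose eF heF using hex
  refine ⟨fun α => (fun ξ => clo α (eF α '' trSet (C ξ))) '' (Iio ((aleph 2).ord)), ?_, ?_⟩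
  · -- each 𝒞 α is a small family of clubs of α
    intro α hα
    obtain ⟨hm, hs, hlt, hcofe, hcont⟩ := heF α hα.2
    constructor
    · have h1 := Cardinal.mk_image_le_lift
        (f := fun ξ => clo α (eF α '' trSet (C ξ))) (s := Iio ((aleph 2).ord))
      rw [Ordinal.mk_Iio_ordinal, Cardinal.card_ord] at h1
      rw [Cardinal.lift_lift, Cardinal.lift_aleph, Ordinal.lift_ofNat] at h1
      rwa [← Cardinal.lift_le.{u_1 + 1, u_3 + 1}, Cardinal.lift_aleph,
        Ordinal.lift_ofNat]
    · rintro D ⟨ξ, hξ, rfl⟩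
      obtain ⟨hCb, hCu, -⟩ := trSet_isClub (hC ξ hξ)
      refine clo_isClub ?_ ?_
      · rintro x ⟨β, hβ, rfl⟩
        exact hlt β (hCb β hβ)
      · intro x hx
        obtain ⟨β, hβ, hxβ⟩ := hcofe x hx
        obtain ⟨γ, hγ, hβγ⟩ := hCu β hβ
        exact ⟨eF α γ, ⟨γ, hγ, rfl⟩, (hxβ.trans_le (hm hβγ)).le⟩
  · -- guessing
    intro E hE
    -- the enumeration of E (made unbounded in all of Ordinal)
    set E' : Set Ordinal := E ∪ {x | (aleph 2).ord ≤ x} with hE'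
    have hE'unb : ¬ BddAbove E' := by
      rw [not_bddAbove_iff]
      intro a
      exact ⟨max (a + 1) ((aleph 2).ord), Or.inr (show (aleph 2).ord ≤ _ from le_max_right _ _),
        lt_of_lt_of_le (lt_add_one a) (le_max_left _ _)⟩
    set f : Ordinal → Ordinal := Ordinal.enumOrd E' with hf
    have hfmono : StrictMono f := Ordinal.enumOrd_strictMono hE'unb
    have hfE : ∀ β < (aleph 2).ord, f β ∈ E := by
      intro β
      induction β using Ordinal.induction with
      | _ β IH =>
        intro hβ
        have hvals : ∀ γ (h : γ < β), f γ < (aleph 2).ord :=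
          fun γ h => hE.1 _ (IH γ h (h.trans hβ))
        have hs : Ordinal.blsub β (fun γ _ => f γ) < (aleph 2).ord :=
          Ordinal.blsub_lt_ord (by rw [hw2cof]; exact Cardinal.lt_ord.1 hβ) hvals
        obtain ⟨a, haE, hsa⟩ := hE.2.1 _ hs
        have hfa : f β ≤ a := Ordinal.enumOrd_le_of_forall_lt (Or.inl haE)
          (fun γ hγ => lt_of_lt_of_le (Ordinal.lt_blsub _ γ hγ) hsa)
        rcases Ordinal.enumOrd_mem hE'unb β with h | h
        · exact h
        · exact absurd (hE.1 a haE) (not_lt_of_ge (le_trans h hfa))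
    -- the ordinal α
    set α : Ordinal := Ordinal.blsub (aleph 1).ord (fun β _ => f β) with hα
    have hfltα : ∀ β < (aleph 1).ord, f β < α := fun β hβ => Ordinal.lt_blsub _ β hβ
    have hαlt : α < (aleph 2).ord :=
      Ordinal.blsub_lt_ord
        (by rw [hw2cof, Cardinal.card_ord]; exact Cardinal.aleph_lt_aleph.2 one_lt_two)
        (fun β hβ => hE.1 _ (hfE β (hβ.trans hw12)))
    have hαcof : α.cof = aleph 1 := by
      refine le_antisymm ?_ ?_
      · have := Ordinal.cof_blsub_le (fun β (_ : β < (aleph 1).ord) => f β)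
        rwa [Cardinal.card_ord] at this
      · rw [Ordinal.le_cof_iff_lsub]
        intro ι h hlsub
        by_contra hlt
        push_neg at hlt
        have hhα : ∀ i, h i < α := fun i => hlsub ▸ Ordinal.lt_lsub h i
        choose b hb1 hb2 using fun i => Ordinal.lt_blsub_iff.1 (hhα i)
        have hB : (⨆ i, Order.succ (b i)) < (aleph 1).ord :=
          Ordinal.iSup_lt_ord (by rw [hw1cof]; exact hlt)
            (fun i => hw1lim.succ_lt (hb1 i))
        have hiB : ∀ i, h i < f (⨆ i, Order.succ (b i)) := fun i =>
          (hb2 i).trans_lt (hfmono ((Order.lt_succ (b i)).trans_le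
            (Ordinal.le_iSup _ i)))
        exact (hfltα _ hB).not_ge (hlsub ▸ Ordinal.lsub_le hiB)
    -- E has many points below α
    have hEα : ∀ x < α, ∃ z ∈ E, x < z ∧ z < α := by
      intro x hx
      obtain ⟨β, hβ, hxf⟩ := Ordinal.lt_blsub_iff.1 hx
      have hβ1 : Order.succ β < (aleph 1).ord := hw1lim.succ_lt hβ
      exact ⟨f (Order.succ β), hfE _ (hβ1.trans hw12),
        hxf.trans_lt (hfmono (Order.lt_succ β)), hfltα _ hβ1⟩
    obtain ⟨hm, hs, hlt, hcofe, hcont⟩ := heF α hαcof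
    -- the pullback of E along eF α is a club of ω₁
    set B : Set Ordinal := {β | β < (aleph 1).ord ∧ eF α β ∈ E} with hB
    have hBclub : IsClubSet B (aleph 1).ord := by
      refine ⟨fun x hx => hx.1, ?_, ?_⟩
      · -- unbounded
        intro x hx
        have step : ∀ β, ∃ β', β < (aleph 1).ord →
            (β < β' ∧ β' < (aleph 1).ord ∧ ∃ z ∈ E, eF α β < z ∧ z < eF α β') := by
          intro β
          by_cases hβ : β < (aleph 1).ord
          · obtain ⟨z, hzE, h1, h2⟩ := hEα (eF α β) (hlt β hβ)
            obtain ⟨γ, hγ, hzγ⟩ := hcofe z h2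
            refine ⟨max γ (Order.succ β), fun _ => ⟨?_, ?_, z, hzE, h1, ?_⟩⟩
            · exact lt_of_lt_of_le (Order.lt_succ β) (le_max_right _ _)
            · exact max_lt hγ (hw1lim.succ_lt hβ)
            · exact hzγ.trans_le (hm (le_max_left _ _))
          · exact ⟨0, fun h' => absurd h' hβ⟩
        choose nxt hnxt using step
        set b : ℕ → Ordinal := fun n => Nat.rec x (fun _ ih => nxt ih) n with hb
        have hblt : ∀ n, b n < (aleph 1).ord := by
          intro n
          induction n with
          | zero => exact hx
          | succ n ih => exact (hnxt (b n) ih).2.1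
        have hbmono : ∀ n, b n < b (n + 1) := fun n => (hnxt (b n) (hblt n)).1
        have hz : ∀ n, ∃ z ∈ E, eF α (b n) < z ∧ z < eF α (b (n + 1)) :=
          fun n => (hnxt (b n) (hblt n)).2.2
        have hbS : (⨆ n, b n) < (aleph 1).ord := by
          refine Ordinal.iSup_lt_ord_lift ?_ hblt
          rw [hw1cof, Cardinal.mk_nat, Cardinal.lift_aleph0]
          exact aleph0_lt_aleph_one
        have hble : ∀ n, b n ≤ ⨆ n, b n := fun n => Ordinal.le_iSup b n
        have hbltS : ∀ n, b n < ⨆ n, b n := fun n => (hbmono n).trans_le (hble (n + 1))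
        have hbSE : eF α (⨆ n, b n) ∈ E := by
          refine hE.2.2 _ ((hlt _ hbS).trans hαlt) ?_ ?_
          · obtain ⟨z0, -, h1, h2⟩ := hz 0
            have : z0 < eF α (⨆ n, b n) := h2.trans_le (hm (hble 1))
            exact pos_iff_ne_zero.1 (lt_of_le_of_lt (show (0 : Ordinal) ≤ z0 from zero_le) this)
          · intro y hy
            obtain ⟨γ, hγ, hyγ⟩ := hcont _ y hy
            have : ∃ n, γ < b n := by
              by_contra hno
              push_neg at hno
              exact hγ.not_ge (Ordinal.iSup_le fun n => hno n)
            obtain ⟨n, hn⟩ := this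
            obtain ⟨z, hzE, hz1, hz2⟩ := hz n
            refine ⟨z, hzE, ?_, hz2.trans_le (hm (hble (n + 1)))⟩
            have h1 : eF α (Order.succ γ) ≤ eF α (b n) := hm (Order.succ_le_of_lt hn)
            exact hyγ.trans_le (h1.trans hz1.le)
        exact ⟨⨆ n, b n, ⟨hbS, hbSE⟩, le_of_lt (hbltS 0)⟩
      · -- closed
        intro β hβ hβ0 hlim
        refine ⟨hβ, hE.2.2 _ ((hlt β hβ).trans hαlt) ?_ ?_⟩
        · obtain ⟨γ, hγB, -, hγβ⟩ := hlim 0 (pos_iff_ne_zero.2 hβ0)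
          exact pos_iff_ne_zero.1
            (lt_of_le_of_lt zero_le (hs hγβ hβ))
        · intro y hy
          obtain ⟨γ, hγβ, hyγ⟩ := hcont β y hy
          obtain ⟨γ', hγ'B, hγγ', hγ'β⟩ := hlim γ hγβ
          exact ⟨eF α γ', hγ'B.2,
            hyγ.trans_le (hm (Order.succ_le_of_lt hγγ')), hs hγ'β hβ⟩
    obtain ⟨ξ, hξ, hCB0⟩ := hdense (trSet B) (trSet_isClub hBclub)
    have hCB : trSet (C ξ) ⊆ B := (trSet_mono hCB0).trans trSet_trSet
    refine ⟨α, ⟨hαlt, hαcof⟩, clo α (eF α '' trSet (C ξ)), ⟨ξ, hξ, rfl⟩, ?_⟩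
    rintro x (hx | ⟨hxα, hx0, hxlim⟩)
    · obtain ⟨β, hβ, rfl⟩ := hx
      exact (hCB hβ).2
    · refine hE.2.2 x (hxα.trans hαlt) hx0 ?_
      intro y hy
      obtain ⟨z, ⟨β, hβ, rfl⟩, hyz, hzx⟩ := hxlim y hy
      exact ⟨eF α β, (hCB hβ).2, hyz, hzx⟩
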